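/- Assume f satisfies (f1) and (f2) with constant B ∈ [1,∞), and for ρ > 1 let φ(ρ) be the unique value > s₀ with F(φ(ρ)) = (B/4)·ρ·e^{−ρ+1}. Then for every ε > 0 there exist ρ_ε > 1 and constants c, C > 0 such that for all ρ > ρ_ε: c · ρ^{−(1/B + ε)} ≤ f(φ(ρ)) · F(φ(ρ)) ≤ C · ρ^{−(1/B − ε)}. -/

import Mathlib

open MeasureTheory Filter

/-- `Fint f s = ∫_s^∞ dτ / f(τ)`. -/
noncomputable def Fint (f : ℝ → ℝ) (s : ℝ) : ℝ := ∫ τ in Set.Ioi s, 1 / f τ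

/-- `1/B₁[f](s) = (−log F(s))·(1 − f'(s)·F(s))`, with `G` playing the role of `F`. -/
noncomputable def invB1 (f G : ℝ → ℝ) (s : ℝ) : ℝ :=
  (-Real.log (G s)) * (1 - deriv f s * G s)

/-- `1/B₂[f](s) = f'(s)·F(s)·(log F(s))²·(f(s)·f''(s)·F(s)/f'(s) − 1)`,
with `G` playing the role of `F`. -/
noncomputable def invB2 (f G : ℝ → ℝ) (s : ℝ) : ℝ :=
  deriv f s * G s * (Real.log (G s)) ^ 2 *
    (f s * deriv (deriv f) s * G s / deriv f s - 1)

/-- The model singular solution `v`. -/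
noncomputable def modelv (B t : ℝ) : ℝ :=
  if B = 1 then Real.log (-2 * Real.log t) else (-2 * Real.log t) ^ ((B - 1) / B)

/-- The model nonlinearity `g`. -/
noncomputable def modelg (B s : ℝ) : ℝ :=
  if B = 1 then 4 * Real.exp (Real.exp s - 2 * s)
  else (4 / (B * (B / (B - 1)))) * s ^ (1 - 2 * (B / (B - 1))) * Real.exp (s ^ (B / (B - 1)))

/-- The model function `G(s) = ∫_s^∞ dτ/g(τ)` in closed form. -/
noncomputable def modelG (B s : ℝ) : ℝ :=
  if B = 1 then (1 / 4) * (Real.exp s + 1) * Real.exp (-Real.exp s)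
  else (B / 4) * (s ^ (B / (B - 1)) + 1) * Real.exp (-(s ^ (B / (B - 1))))

/-- The Emden–Fowler model profile `ψ`. -/
noncomputable def modelpsi (B ρ : ℝ) : ℝ :=
  if B = 1 then Real.log (ρ - 1) else (ρ - 1) ^ ((B - 1) / B)


private lemma Fint_split {f : ℝ → ℝ} {s₀ a b : ℝ}
    (hfint : ∀ s, s₀ < s → IntegrableOn (fun τ => 1 / f τ) (Set.Ioi s))
    (ha : s₀ < a) (hab : a ≤ b) :
    Fint f a = (∫ τ in Set.Ioc a b, 1 / f τ) + Fint f b := by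
  have hb : s₀ < b := lt_of_lt_of_le ha hab
  have h1 : IntegrableOn (fun τ => 1 / f τ) (Set.Ioc a b) :=
    (hfint a ha).mono_set Set.Ioc_subset_Ioi_self
  rw [Fint, ← Set.Ioc_union_Ioi_eq_Ioi hab,
    MeasureTheory.setIntegral_union (Set.Ioc_disjoint_Ioi le_rfl) measurableSet_Ioi h1
      (hfint b hb)]
  rfl

private lemma Fint_nonneg {f : ℝ → ℝ} {s₀ a : ℝ}
    (hfpos : ∀ s, s₀ < s → 0 < f s) (ha : s₀ < a) : 0 ≤ Fint f a :=
  setIntegral_nonneg measurableSet_Ioi fun τ hτ =>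
    le_of_lt (div_pos one_pos (hfpos τ (ha.trans hτ)))

private lemma Fint_pos {f : ℝ → ℝ} {s₀ a : ℝ}
    (hfpos : ∀ s, s₀ < s → 0 < f s)
    (hfint : ∀ s, s₀ < s → IntegrableOn (fun τ => 1 / f τ) (Set.Ioi s))
    (ha : s₀ < a) : 0 < Fint f a := by
  have hab : a ≤ a + 1 := by linarith
  rw [Fint_split hfint ha hab]
  have h1 : IntegrableOn (fun τ => 1 / f τ) (Set.Ioc a (a + 1)) :=
    (hfint a ha).mono_set Set.Ioc_subset_Ioi_self
  have hii : IntervalIntegrable (fun τ => 1 / f τ) volume a (a + 1) := by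
    rw [intervalIntegrable_iff, Set.uIoc_of_le hab]; exact h1
  have hpos : 0 < ∫ τ in Set.Ioc a (a + 1), 1 / f τ := by
    rw [← intervalIntegral.integral_of_le hab]
    exact intervalIntegral.intervalIntegral_pos_of_pos_on hii
      (fun x hx => div_pos one_pos (hfpos x (ha.trans hx.1))) (by linarith)
  have := Fint_nonneg hfpos (lt_of_lt_of_le ha hab)
  linarith

private lemma Fint_lt {f : ℝ → ℝ} {s₀ a b : ℝ}
    (hfpos : ∀ s, s₀ < s → 0 < f s)
    (hfint : ∀ s, s₀ < s → IntegrableOn (fun τ => 1 / f τ) (Set.Ioi s))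
    (ha : s₀ < a) (hab : a < b) : Fint f b < Fint f a := by
  rw [Fint_split hfint ha hab.le]
  have h1 : IntegrableOn (fun τ => 1 / f τ) (Set.Ioc a b) :=
    (hfint a ha).mono_set Set.Ioc_subset_Ioi_self
  have hii : IntervalIntegrable (fun τ => 1 / f τ) volume a b := by
    rw [intervalIntegrable_iff, Set.uIoc_of_le hab.le]; exact h1
  have hpos : 0 < ∫ τ in Set.Ioc a b, 1 / f τ := by
    rw [← intervalIntegral.integral_of_le hab.le]
    exact intervalIntegral.intervalIntegral_pos_of_pos_on hii
      (fun x hx => div_pos one_pos (hfpos x (ha.trans hx.1))) hab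
  linarith

private lemma Fint_hasDerivAt {f : ℝ → ℝ} {s₀ s : ℝ}
    (hf : ContDiffOn ℝ 2 f (Set.Ioi s₀))
    (hfpos : ∀ s, s₀ < s → 0 < f s)
    (hfint : ∀ s, s₀ < s → IntegrableOn (fun τ => 1 / f τ) (Set.Ioi s))
    (hs : s₀ < s) : HasDerivAt (Fint f) (-(1 / f s)) s := by
  set a := (s₀ + s) / 2 with ha_def
  have ha : s₀ < a := by rw [ha_def]; linarith
  have has : a < s := by rw [ha_def]; linarith
  have hcont : ContinuousOn (fun τ => 1 / f τ) (Set.Ioi s₀) := by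
    intro x hx
    exact (continuousOn_const.div hf.continuousOn fun y hy => (hfpos y hy).ne').continuousWithinAt hx
  have hii : IntervalIntegrable (fun τ => 1 / f τ) volume a s := by
    rw [intervalIntegrable_iff, Set.uIoc_of_le has.le]
    exact (hfint a ha).mono_set Set.Ioc_subset_Ioi_self
  have hmeas : StronglyMeasurableAtFilter (fun τ => 1 / f τ) (nhds s) :=
    hcont.stronglyMeasurableAtFilter isOpen_Ioi s hs
  have hFTC : HasDerivAt (fun x => Fint f a - ∫ τ in a..x, 1 / f τ) (-(1 / f s)) s :=
    (intervalIntegral.integral_hasDerivAt_right hii hmeas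
      ((hcont s hs).continuousAt (isOpen_Ioi.mem_nhds hs))).const_sub (Fint f a)
  apply hFTC.congr_of_eventuallyEq
  filter_upwards [isOpen_Ioi.mem_nhds (Set.mem_Ioi.mpr has)] with x hx
  rw [Fint_split hfint ha (le_of_lt hx), intervalIntegral.integral_of_le (le_of_lt hx)]
  ring

private lemma Fint_tendsto_zero {f : ℝ → ℝ} {s₀ : ℝ}
    (hfint : ∀ s, s₀ < s → IntegrableOn (fun τ => 1 / f τ) (Set.Ioi s)) :
    Tendsto (Fint f) atTop (nhds 0) := by
  set a := s₀ + 1 with ha_def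
  have ha : s₀ < a := by rw [ha_def]; linarith
  have h1 : Tendsto (fun x => Fint f a - ∫ τ in a..x, 1 / f τ) atTop (nhds 0) := by
    have := MeasureTheory.intervalIntegral_tendsto_integral_Ioi a (hfint a ha) tendsto_id
    have h2 := (tendsto_const_nhds (x := Fint f a) (f := atTop)).sub this
    simpa [Fint] using h2
  apply h1.congr'
  filter_upwards [eventually_gt_atTop a] with x hx
  rw [Fint_split hfint ha (le_of_lt hx), intervalIntegral.integral_of_le (le_of_lt hx)]
  ring

/-- Lemma (fF decay): for every `ε > 0` there are `ρ_ε > 1` and `c, C > 0` with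
`c·ρ^{−(1/B+ε)} ≤ f(φ(ρ))F(φ(ρ)) ≤ C·ρ^{−(1/B−ε)}` for all `ρ > ρ_ε`. -/
theorem stmt10 (f φ : ℝ → ℝ) (s₀ B : ℝ) (hs₀ : 0 < s₀)
    (hf : ContDiffOn ℝ 2 f (Set.Ioi s₀))
    (hfpos : ∀ s, s₀ < s → 0 < f s)
    (hf' : ∀ s, s₀ < s → 0 < deriv f s)
    (hfint : ∀ s, s₀ < s → IntegrableOn (fun τ => 1 / f τ) (Set.Ioi s))
    (hB : 1 ≤ B)
    (hf2a : Tendsto (fun s => deriv f s * Fint f s) atTop (nhds 1))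
    (hf2b : Tendsto (fun s => invB2 f (Fint f) s) atTop (nhds (1 / B)))
    (hφ : ∀ ρ > (1 : ℝ), s₀ < φ ρ ∧ Fint f (φ ρ) = (B / 4) * ρ * Real.exp (-ρ + 1)) :
    ∀ ε > (0 : ℝ), ∃ ρε > (1 : ℝ), ∃ c > (0 : ℝ), ∃ C > (0 : ℝ), ∀ ρ > ρε,
      c * ρ ^ (-(1 / B + ε)) ≤ f (φ ρ) * Fint f (φ ρ)
      ∧ f (φ ρ) * Fint f (φ ρ) ≤ C * ρ ^ (-(1 / B - ε)) := by
  intro ε hε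
  have hFpos : ∀ s, s₀ < s → 0 < Fint f s := fun s hs => Fint_pos hfpos hfint hs
  have hFD : ∀ s, s₀ < s → HasDerivAt (Fint f) (-(1 / f s)) s := fun s hs =>
    Fint_hasDerivAt hf hfpos hfint hs
  have hF0 : Tendsto (Fint f) atTop (nhds 0) := Fint_tendsto_zero hfint
  have hf1d : ∀ s, s₀ < s → HasDerivAt f (deriv f s) s := fun s hs =>
    ((hf.differentiableOn (by norm_num)).differentiableAt (isOpen_Ioi.mem_nhds hs)).hasDerivAt
  have hf2d : ∀ s, s₀ < s → HasDerivAt (deriv f) (deriv (deriv f) s) s := by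
    intro s hs
    have h2 : ContDiffOn ℝ 1 (deriv f) (Set.Ioi s₀) :=
      hf.deriv_of_isOpen isOpen_Ioi (by norm_num)
    exact ((h2.differentiableOn one_ne_zero).differentiableAt (isOpen_Ioi.mem_nhds hs)).hasDerivAt
  have huTop : Tendsto (fun s => -Real.log (Fint f s)) atTop atTop := by
    have h1 : Tendsto (Fint f) atTop (nhdsWithin 0 (Set.Ioi 0)) := by
      rw [tendsto_nhdsWithin_iff]
      exact ⟨hF0, (eventually_gt_atTop s₀).mono fun s hs => hFpos s hs⟩
    exact tendsto_neg_atBot_atTop.comp (Real.tendsto_log_nhdsGT_zero.comp h1)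
  set ε' := ε / 2 with hε'def
  have hε' : 0 < ε' := by positivity
  have evAll : ∀ᶠ s in atTop,
      s₀ < s ∧ 1 < -Real.log (Fint f s) ∧ |invB2 f (Fint f) s - 1 / B| < ε' :=
    (eventually_gt_atTop s₀).and ((huTop.eventually_gt_atTop 1).and (by
      have := Metric.tendsto_nhds.mp hf2b ε' hε'
      simpa [Real.dist_eq] using this))
  obtain ⟨s₁, hs₁⟩ := eventually_atTop.mp evAll
  have hs₁0 : s₀ < s₁ := (hs₁ s₁ le_rfl).1
  have hu' : ∀ s, s₀ < s →
      HasDerivAt (fun t => -Real.log (Fint f t)) (1 / (f s * Fint f s)) s := by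
    intro s hs
    have h := ((hFD s hs).log (hFpos s hs).ne').neg
    refine h.congr_deriv ?_
    symm
    field_simp
  set βp := 1 / B + ε' with hβp
  set βm := 1 / B - ε' with hβm
  -- derivative of E + β/u
  have hWd : ∀ β : ℝ, ∀ s, s₁ ≤ s →
      HasDerivAt (fun t => deriv f t * Fint f t - 1 + β * (-Real.log (Fint f t))⁻¹)
        ((invB2 f (Fint f) s - β) / ((-Real.log (Fint f s)) ^ 2 * (f s * Fint f s))) s := by
    intro β s hs
    obtain ⟨Hs0, Hu, _⟩ := hs₁ s hs
    have hfne := (hfpos s Hs0).ne'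
    have hFne := (hFpos s Hs0).ne'
    have hf'ne := (hf' s Hs0).ne'
    have hune : -Real.log (Fint f s) ≠ 0 := by positivity
    have hlogne : Real.log (Fint f s) ≠ 0 := fun h => by simp [h] at hune
    have hE : HasDerivAt (fun t => deriv f t * Fint f t - 1)
        (deriv (deriv f) s * Fint f s + deriv f s * -(1 / f s)) s :=
      ((hf2d s Hs0).mul (hFD s Hs0)).sub_const 1
    have hQ : HasDerivAt (fun t => β * (-Real.log (Fint f t))⁻¹)
        (β * (-(1 / (f s * Fint f s)) / (-Real.log (Fint f s)) ^ 2)) s :=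
      ((hu' s Hs0).inv hune).const_mul β
    have h := hE.add hQ
    refine h.congr_deriv ?_
    symm
    rw [invB2]
    field_simp
    ring
  have hWlim : ∀ β : ℝ, Tendsto
      (fun t => deriv f t * Fint f t - 1 + β * (-Real.log (Fint f t))⁻¹) atTop (nhds 0) := by
    intro β
    have h1 : Tendsto (fun t => deriv f t * Fint f t - 1) atTop (nhds 0) := by
      simpa using hf2a.sub_const 1
    have h2 : Tendsto (fun t => β * (-Real.log (Fint f t))⁻¹) atTop (nhds 0) := by
      simpa using (tendsto_inv_atTop_zero.comp huTop).const_mul β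
    simpa using h1.add h2
  have hdenpos : ∀ s, s₁ ≤ s → 0 < (-Real.log (Fint f s)) ^ 2 * (f s * Fint f s) := by
    intro s hs
    obtain ⟨Hs0, Hu, _⟩ := hs₁ s hs
    have h1 : 0 < -Real.log (Fint f s) := lt_trans one_pos Hu
    exact mul_pos (pow_pos h1 2) (mul_pos (hfpos s Hs0) (hFpos s Hs0))
  -- W (with βp) is antitone, hence nonnegative
  have hWanti : AntitoneOn
      (fun t => deriv f t * Fint f t - 1 + βp * (-Real.log (Fint f t))⁻¹) (Set.Ici s₁) := by
    apply antitoneOn_of_deriv_nonpos (convex_Ici s₁)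
    · exact fun x hx => ((hWd βp x hx).differentiableAt.continuousAt).continuousWithinAt
    · rw [interior_Ici]
      exact fun x hx => ((hWd βp x (le_of_lt hx)).differentiableAt).differentiableWithinAt
    · rw [interior_Ici]
      intro x hx
      rw [(hWd βp x (le_of_lt hx)).deriv]
      obtain ⟨Hs0, Hu, HB2⟩ := hs₁ x (le_of_lt hx)
      apply div_nonpos_of_nonpos_of_nonneg _ (hdenpos x (le_of_lt hx)).le
      have := (abs_lt.mp HB2).2
      rw [hβp]; linarith
  have hWnonneg : ∀ s, s₁ ≤ s →
      0 ≤ deriv f s * Fint f s - 1 + βp * (-Real.log (Fint f s))⁻¹ := by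
    intro s hs
    refine le_of_tendsto (hWlim βp) ?_
    filter_upwards [eventually_ge_atTop s] with t ht
    exact hWanti (Set.mem_Ici.mpr hs) (Set.mem_Ici.mpr (le_trans hs ht)) ht
  -- V (with βm) is monotone, hence nonpositive
  have hVmono : MonotoneOn
      (fun t => deriv f t * Fint f t - 1 + βm * (-Real.log (Fint f t))⁻¹) (Set.Ici s₁) := by
    apply monotoneOn_of_deriv_nonneg (convex_Ici s₁)
    · exact fun x hx => ((hWd βm x hx).differentiableAt.continuousAt).continuousWithinAt
    · rw [interior_Ici]
      exact fun x hx => ((hWd βm x (le_of_lt hx)).differentiableAt).differentiableWithinAt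
    · rw [interior_Ici]
      intro x hx
      rw [(hWd βm x (le_of_lt hx)).deriv]
      apply div_nonneg _ (hdenpos x (le_of_lt hx)).le
      obtain ⟨Hs0, Hu, HB2⟩ := hs₁ x (le_of_lt hx)
      have := (abs_lt.mp HB2).1
      rw [hβm]; linarith
  have hVnonpos : ∀ s, s₁ ≤ s →
      deriv f s * Fint f s - 1 + βm * (-Real.log (Fint f s))⁻¹ ≤ 0 := by
    intro s hs
    refine ge_of_tendsto (hWlim βm) ?_
    filter_upwards [eventually_ge_atTop s] with t ht
    exact hVmono (Set.mem_Ici.mpr hs) (Set.mem_Ici.mpr (le_trans hs ht)) ht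
  -- derivative of log h + β log u
  have hhd : ∀ s, s₀ < s →
      HasDerivAt (fun t => f t * Fint f t) (deriv f s * Fint f s - 1) s := by
    intro s hs
    have h := (hf1d s hs).mul (hFD s hs)
    refine h.congr_deriv ?_
    symm
    field_simp [(hfpos s hs).ne']
    ring
  have hPQ : ∀ β : ℝ, ∀ s, s₁ ≤ s →
      HasDerivAt (fun t => Real.log (f t * Fint f t) + β * Real.log (-Real.log (Fint f t)))
        ((deriv f s * Fint f s - 1 + β * (-Real.log (Fint f s))⁻¹) / (f s * Fint f s)) s := by
    intro β s hs
    obtain ⟨Hs0, Hu, _⟩ := hs₁ s hs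
    have hhpos : 0 < f s * Fint f s := mul_pos (hfpos s Hs0) (hFpos s Hs0)
    have hune : -Real.log (Fint f s) ≠ 0 := by positivity
    have hlogne : Real.log (Fint f s) ≠ 0 := fun hh => by simp [hh] at hune
    have h := ((hhd s Hs0).log hhpos.ne').add (((hu' s Hs0).log hune).const_mul β)
    refine h.congr_deriv ?_
    symm
    field_simp [(hfpos s Hs0).ne', (hFpos s Hs0).ne', hlogne]
  have hPmono : MonotoneOn
      (fun t => Real.log (f t * Fint f t) + βp * Real.log (-Real.log (Fint f t)))
      (Set.Ici s₁) := by
    apply monotoneOn_of_deriv_nonneg (convex_Ici s₁)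
    · exact fun x hx => ((hPQ βp x hx).differentiableAt.continuousAt).continuousWithinAt
    · rw [interior_Ici]
      exact fun x hx => ((hPQ βp x (le_of_lt hx)).differentiableAt).differentiableWithinAt
    · rw [interior_Ici]
      intro x hx
      rw [(hPQ βp x (le_of_lt hx)).deriv]
      obtain ⟨Hs0, _, _⟩ := hs₁ x (le_of_lt hx)
      exact div_nonneg (hWnonneg x (le_of_lt hx))
        (mul_pos (hfpos x Hs0) (hFpos x Hs0)).le
  have hQanti : AntitoneOn
      (fun t => Real.log (f t * Fint f t) + βm * Real.log (-Real.log (Fint f t)))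
      (Set.Ici s₁) := by
    apply antitoneOn_of_deriv_nonpos (convex_Ici s₁)
    · exact fun x hx => ((hPQ βm x hx).differentiableAt.continuousAt).continuousWithinAt
    · rw [interior_Ici]
      exact fun x hx => ((hPQ βm x (le_of_lt hx)).differentiableAt).differentiableWithinAt
    · rw [interior_Ici]
      intro x hx
      rw [(hPQ βm x (le_of_lt hx)).deriv]
      obtain ⟨Hs0, _, _⟩ := hs₁ x (le_of_lt hx)
      exact div_nonpos_of_nonpos_of_nonneg (hVnonpos x (le_of_lt hx))
        (mul_pos (hfpos x Hs0) (hFpos x Hs0)).le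
  set c₀ := Real.exp (Real.log (f s₁ * Fint f s₁) + βp * Real.log (-Real.log (Fint f s₁)))
    with hc₀def
  set C₀ := Real.exp (Real.log (f s₁ * Fint f s₁) + βm * Real.log (-Real.log (Fint f s₁)))
    with hC₀def
  have hlow : ∀ s, s₁ ≤ s →
      c₀ * (-Real.log (Fint f s)) ^ (-βp) ≤ f s * Fint f s := by
    intro s hs
    obtain ⟨Hs0, Hu, _⟩ := hs₁ s hs
    have hupos : 0 < -Real.log (Fint f s) := lt_trans one_pos Hu
    have hhpos : 0 < f s * Fint f s := mul_pos (hfpos s Hs0) (hFpos s Hs0)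
    have hmono : Real.log (f s₁ * Fint f s₁) + βp * Real.log (-Real.log (Fint f s₁))
        ≤ Real.log (f s * Fint f s) + βp * Real.log (-Real.log (Fint f s)) :=
      hPmono Set.self_mem_Ici (Set.mem_Ici.mpr hs) hs
    calc c₀ * (-Real.log (Fint f s)) ^ (-βp)
        = Real.exp ((Real.log (f s₁ * Fint f s₁) + βp * Real.log (-Real.log (Fint f s₁)))
            - βp * Real.log (-Real.log (Fint f s))) := by
          rw [hc₀def, Real.rpow_def_of_pos hupos, ← Real.exp_add]; ring_nf
      _ ≤ Real.exp (Real.log (f s * Fint f s)) := by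
          apply Real.exp_le_exp.mpr; linarith
      _ = f s * Fint f s := Real.exp_log hhpos
  have hupp : ∀ s, s₁ ≤ s →
      f s * Fint f s ≤ C₀ * (-Real.log (Fint f s)) ^ (-βm) := by
    intro s hs
    obtain ⟨Hs0, Hu, _⟩ := hs₁ s hs
    have hupos : 0 < -Real.log (Fint f s) := lt_trans one_pos Hu
    have hhpos : 0 < f s * Fint f s := mul_pos (hfpos s Hs0) (hFpos s Hs0)
    have hanti : Real.log (f s * Fint f s) + βm * Real.log (-Real.log (Fint f s))
        ≤ Real.log (f s₁ * Fint f s₁) + βm * Real.log (-Real.log (Fint f s₁)) :=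
      hQanti Set.self_mem_Ici (Set.mem_Ici.mpr hs) hs
    calc f s * Fint f s = Real.exp (Real.log (f s * Fint f s)) := (Real.exp_log hhpos).symm
      _ ≤ Real.exp ((Real.log (f s₁ * Fint f s₁) + βm * Real.log (-Real.log (Fint f s₁)))
            - βm * Real.log (-Real.log (Fint f s))) := by
          apply Real.exp_le_exp.mpr; linarith
      _ = C₀ * (-Real.log (Fint f s)) ^ (-βm) := by
          rw [hC₀def, Real.rpow_def_of_pos hupos, ← Real.exp_add]; ring_nf
  -- now the ρ side
  have hBpos : (0 : ℝ) < B := lt_of_lt_of_le one_pos hB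
  have hid : ∀ ρ : ℝ, 1 < ρ →
      -Real.log (Fint f (φ ρ)) = ρ - 1 - Real.log (B / 4) - Real.log ρ := by
    intro ρ hρ
    have hρ0 : (0 : ℝ) < ρ := lt_trans one_pos hρ
    rw [(hφ ρ hρ).2, Real.log_mul (by positivity) (Real.exp_ne_zero _),
      Real.log_mul (by positivity) hρ0.ne', Real.log_exp]
    ring
  have hratio : Tendsto (fun ρ : ℝ => (ρ - 1 - Real.log (B / 4) - Real.log ρ) / ρ)
      atTop (nhds 1) := by
    have h1 : Tendsto (fun ρ : ℝ => Real.log ρ / ρ) atTop (nhds 0) :=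
      Real.isLittleO_log_id_atTop.tendsto_div_nhds_zero
    have h2 : Tendsto (fun ρ : ℝ => (1 + Real.log (B / 4)) / ρ) atTop (nhds 0) :=
      tendsto_const_nhds.div_atTop tendsto_id
    have h3 : Tendsto (fun ρ : ℝ => 1 - ((1 + Real.log (B / 4)) / ρ + Real.log ρ / ρ))
        atTop (nhds 1) := by
      simpa using (tendsto_const_nhds (x := (1 : ℝ)) (f := atTop)).sub (h2.add h1)
    apply h3.congr'
    filter_upwards [eventually_gt_atTop 0] with ρ hρ
    field_simp
    ring
  have hrp : ∀ β : ℝ, Tendsto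
      (fun ρ : ℝ => ((ρ - 1 - Real.log (B / 4) - Real.log ρ) / ρ) ^ (-β)) atTop (nhds 1) := by
    intro β
    have := hratio.rpow_const (p := -β) (Or.inl one_ne_zero)
    simpa using this
  have hFφlim : Tendsto (fun ρ : ℝ => B / 4 * ρ * Real.exp (-ρ + 1)) atTop (nhds 0) := by
    have h0 := (Real.tendsto_pow_mul_exp_neg_atTop_nhds_zero 1).const_mul (B / 4 * Real.exp 1)
    simp only [mul_zero] at h0
    apply h0.congr
    intro ρ
    rw [pow_one, show (-ρ + 1 : ℝ) = 1 + -ρ by ring, Real.exp_add]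
    ring
  have evρ : ∀ᶠ ρ : ℝ in atTop, 1 < ρ
      ∧ B / 4 * ρ * Real.exp (-ρ + 1) < Fint f s₁
      ∧ 1 / 2 < (ρ - 1 - Real.log (B / 4) - Real.log ρ) / ρ
      ∧ 1 / 2 < ((ρ - 1 - Real.log (B / 4) - Real.log ρ) / ρ) ^ (-βp)
      ∧ ((ρ - 1 - Real.log (B / 4) - Real.log ρ) / ρ) ^ (-βm) < 2 :=
    (eventually_gt_atTop 1).and ((hFφlim.eventually_lt_const (hFpos s₁ hs₁0)).and
      ((hratio.eventually_const_lt (by norm_num)).and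
        (((hrp βp).eventually_const_lt (by norm_num)).and
          ((hrp βm).eventually_lt_const (by norm_num)))))
  obtain ⟨ρ₀, hρ₀⟩ := eventually_atTop.mp evρ
  have hc₀pos : 0 < c₀ := Real.exp_pos _
  have hC₀pos : 0 < C₀ := Real.exp_pos _
  refine ⟨max ρ₀ 2, lt_of_lt_of_le one_lt_two (le_max_right _ _),
    c₀ / 2, by positivity, 2 * C₀, by positivity, ?_⟩
  intro ρ hρ
  obtain ⟨hρ1, hFlt, hhalf, htp, htm⟩ :=
    hρ₀ ρ (le_of_lt (lt_of_le_of_lt (le_max_left _ _) hρ))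
  have hρpos : (0 : ℝ) < ρ := lt_trans one_pos hρ1
  set u := ρ - 1 - Real.log (B / 4) - Real.log ρ with hudef
  have hupos : 0 < u := by
    have h := (lt_div_iff₀ hρpos).mp hhalf
    have h0 : (0:ℝ) < 1 / 2 * ρ := by linarith
    exact lt_trans h0 h
  have hφs₁ : s₁ ≤ φ ρ := by
    by_contra hcon
    push_neg at hcon
    have h2 := Fint_lt hfpos hfint (hφ ρ hρ1).1 hcon
    rw [(hφ ρ hρ1).2] at h2
    linarith
  have huid : -Real.log (Fint f (φ ρ)) = u := hid ρ hρ1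
  have hL := hlow (φ ρ) hφs₁
  have hU := hupp (φ ρ) hφs₁
  rw [huid] at hL hU
  have hdiv : 0 ≤ u / ρ := div_nonneg hupos.le hρpos.le
  have hsplit : ∀ β : ℝ, ρ ^ (-β) * (u / ρ) ^ (-β) = u ^ (-β) := by
    intro β
    rw [← Real.mul_rpow hρpos.le hdiv]
    congr 1
    field_simp
  constructor
  · calc c₀ / 2 * ρ ^ (-(1 / B + ε))
        ≤ c₀ / 2 * ρ ^ (-βp) := by
          apply mul_le_mul_of_nonneg_left _ (by positivity)
          apply Real.rpow_le_rpow_of_exponent_le hρ1.le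
          rw [hβp, hε'def]; linarith
      _ = c₀ * ρ ^ (-βp) * (1 / 2) := by ring
      _ ≤ c₀ * ρ ^ (-βp) * ((u / ρ) ^ (-βp)) := by
          exact mul_le_mul_of_nonneg_left htp.le
            (mul_nonneg hc₀pos.le (Real.rpow_nonneg hρpos.le _))
      _ = c₀ * (ρ ^ (-βp) * (u / ρ) ^ (-βp)) := by ring
      _ = c₀ * u ^ (-βp) := by rw [hsplit]
      _ ≤ f (φ ρ) * Fint f (φ ρ) := hL
  · calc f (φ ρ) * Fint f (φ ρ) ≤ C₀ * u ^ (-βm) := hU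
      _ = C₀ * (ρ ^ (-βm) * (u / ρ) ^ (-βm)) := by rw [hsplit]
      _ = C₀ * ρ ^ (-βm) * ((u / ρ) ^ (-βm)) := by ring
      _ ≤ C₀ * ρ ^ (-βm) * 2 := by
          exact mul_le_mul_of_nonneg_left htm.le
            (mul_nonneg hC₀pos.le (Real.rpow_nonneg hρpos.le _))
      _ = 2 * C₀ * ρ ^ (-βm) := by ring
      _ ≤ 2 * C₀ * ρ ^ (-(1 / B - ε)) := by
          apply mul_le_mul_of_nonneg_left _ (by positivity)
          apply Real.rpow_le_rpow_of_exponent_le hρ1.le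
          rw [hβm, hε'def]; linarith
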